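/- Let P have length m, T have length n ≤ 3m/2, k ∈ [0,m], with the prefix and suffix of T of length m being k-mismatch occurrences of P. If d ≥ 2k is a positive integer and Q a primitive string with |Q| ≤ m/(8d) and δ_H(P,Q*) = d (exactly), then |Occ^H_k(P,T)| ≤ 6d. -/

import Mathlib

open List

variable {α : Type*}

/-- The fragment S[i..j) of a string (list) S. -/
def frag (S : List α) (i j : ℕ) : List α := (S.drop i).take (j - i)

/-- Q^∞[a..b): the fragment of the infinite repetition of Q from a (incl.) to b (excl.). -/
def repPrefix [Inhabited α] (Q : List α) (a b : ℕ) : List α :=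
  (List.range' a (b - a)).map (fun i => Q.getD (i % Q.length) default)

/-- Hamming distance of two strings of the same length (counted over positions of S). -/
def hamming [DecidableEq α] [Inhabited α] (S T : List α) : ℕ :=
  ((Finset.range S.length).filter
    (fun i => S.getD i default ≠ T.getD i default)).card

/-- δ_H(S, Q*): Hamming distance of S to the length-|S| prefix of Q^∞. -/
def hammingStar [DecidableEq α] [Inhabited α] (S Q : List α) : ℕ :=
  hamming S (repPrefix Q 0 S.length)

/-- Unit-cost Levenshtein distance (replaces the removed Mathlib `levenshtein Levenshtein.defaultCost`). -/
def levenshteinUnit [DecidableEq α] : List α → List α → ℕ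
  | [], ys => ys.length
  | x :: xs, [] => 1 + levenshteinUnit xs []
  | x :: xs, y :: ys =>
      min (1 + levenshteinUnit xs (y :: ys))
        (min (1 + levenshteinUnit (x :: xs) ys)
          ((if x = y then 0 else 1) + levenshteinUnit xs ys))
termination_by xs ys => xs.length + ys.length

/-- Edit (Levenshtein) distance. -/
def editDist [DecidableEq α] (S T : List α) : ℕ :=
  levenshteinUnit S T

/-- A string is primitive if it is nonempty and not a proper power of a string. -/
def Primitive (Q : List α) : Prop :=
  Q ≠ [] ∧ ∀ (U : List α) (t : ℕ), 2 ≤ t → Q ≠ (List.replicate t U).flatten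

/-- p is a period of S. -/
def IsPeriod [Inhabited α] (p : ℕ) (S : List α) : Prop :=
  0 < p ∧ ∀ i, i + p < S.length → S.getD i default = S.getD (i + p) default

/-- per(S): the smallest period of S. -/
noncomputable def per [Inhabited α] (S : List α) : ℕ := sInf {p | IsPeriod p S}

/-- Occ^H_k(P,T): starting positions of k-mismatch occurrences of P in T. -/
def occH [DecidableEq α] [Inhabited α] (k : ℕ) (P T : List α) : Finset ℕ :=
  (Finset.range (T.length - P.length + 1)).filter
    (fun i => hamming P (frag T i (i + P.length)) ≤ k)

/-- Exact occurrences of B in T. -/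
def occExact [DecidableEq α] (B T : List α) : Finset ℕ :=
  (Finset.range (T.length + 1)).filter (fun i => frag T i (i + B.length) = B)

/-- Occ^E_k(P,T): starting positions of k-error (edit distance) occurrences of P in T. -/
def occE [DecidableEq α] (k : ℕ) (P T : List α) : Set ℕ :=
  {i | ∃ j, i ≤ j ∧ j ≤ T.length ∧ editDist P (frag T i j) ≤ k}

/-- δ_E^cyc(S,Q): minimum edit distance of S to any substring of Q^∞. -/
noncomputable def edCyc [DecidableEq α] [Inhabited α] (S Q : List α) : ℕ :=
  sInf {d | ∃ i j, i ≤ j ∧ d = editDist S (repPrefix Q i j)}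

/-- δ_E(S,Q*): minimum edit distance of S to a prefix of Q^∞. -/
noncomputable def edStar [DecidableEq α] [Inhabited α] (S Q : List α) : ℕ :=
  sInf {d | ∃ j, d = editDist S (repPrefix Q 0 j)}

/-- Minimum edit distance of T to a substring of Q^∞ starting at position x. -/
noncomputable def edStarAt [DecidableEq α] [Inhabited α] (T Q : List α) (x : ℕ) : ℕ :=
  sInf {d | ∃ j, x ≤ j ∧ d = editDist T (repPrefix Q x j)}

/-- Minimum edit distance of T to a substring of Q^∞ ending at a position ≡ y (mod |Q|). -/
noncomputable def edEndAt [DecidableEq α] [Inhabited α] (T Q : List α) (y : ℕ) : ℕ :=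
  sInf {d | ∃ i j, i ≤ j ∧ j % Q.length = y % Q.length ∧ d = editDist T (repPrefix Q i j)}

/-- Minimum edit distance of L to a substring of Q^∞ ending at a multiple of |Q|. -/
noncomputable def edEndMul [DecidableEq α] [Inhabited α] (L Q : List α) : ℕ :=
  sInf {d | ∃ i j, i ≤ j * Q.length ∧ d = editDist L (repPrefix Q i (j * Q.length))}

/-- The fragment S[i..j) of S is locked with respect to Q. -/
def Locked [DecidableEq α] [Inhabited α] (S Q : List α) (i j : ℕ) : Prop :=
  (∃ a : ℕ, edCyc (frag S i j) Q = editDist (frag S i j) (repPrefix Q 0 (a * Q.length))) ∨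
  (j = S.length ∧ edCyc (frag S i j) Q = edStar (frag S i j) Q) ∨
  (i = 0 ∧ edCyc (frag S i j) Q = edEndMul (frag S i j) Q) ∨
  (i = 0 ∧ j = S.length)

/-- rot^j(Q): rotation moving the last j (mod |Q|) characters to the front. -/
def rotR (Q : List α) (j : ℕ) : List α := Q.rotate (Q.length - j % Q.length)

/-- |Mis(T,Q*) ∩ [a,b)|. -/
def misCount [DecidableEq α] [Inhabited α] (T Q : List α) (a b : ℕ) : ℕ :=
  ((Finset.Ico a b).filter (fun i => i < T.length ∧
     T.getD i default ≠ Q.getD (i % Q.length) default)).card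

/-- μ_j: the total weight of aligned mismatch pairs of P and T against Q^∞ at shift j·|Q|:
a pair (τ = j|Q|+π, π) with π ∈ Mis(P,Q*), τ ∈ Mis(T,Q*) has weight 2 − δ_H(P[π],T[τ]). -/
def mu [DecidableEq α] [Inhabited α] (P T Q : List α) (j : ℕ) : ℕ :=
  ∑ π ∈ Finset.range P.length,
    if P.getD π default ≠ Q.getD (π % Q.length) default ∧
       j * Q.length + π < T.length ∧
       T.getD (j * Q.length + π) default ≠ Q.getD ((j * Q.length + π) % Q.length) default
    then (if P.getD π default = T.getD (j * Q.length + π) default then 2 else 1)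
    else 0

set_option linter.unusedSectionVars false

section Aux

variable {α : Type*} [DecidableEq α] [Inhabited α]

lemma my_getD_frag (T : List α) (i π L : ℕ) (hπ : π < L) (h : i + π < T.length) :
    (frag T i (i + L)).getD π default = T.getD (i + π) default := by
  unfold frag
  have hL : i + L - i = L := by omega
  rw [hL]
  have hd : π < (T.drop i).length := by rw [List.length_drop]; omega
  have ht : π < ((T.drop i).take L).length := by
    rw [List.length_take, List.length_drop]; omega
  rw [List.getD_eq_getElem _ _ ht, List.getD_eq_getElem _ _ h]
  rw [List.getElem_take, List.getElem_drop]

lemma my_getD_rep (Q : List α) (L π : ℕ) (hπ : π < L) :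
    (repPrefix Q 0 L).getD π default = Q.getD (π % Q.length) default := by
  unfold repPrefix
  have h1 : π < ((List.range' 0 (L - 0)).map
      (fun i => Q.getD (i % Q.length) default)).length := by
    simp; omega
  rw [List.getD_eq_getElem _ _ h1, List.getElem_map, List.getElem_range']
  simp

lemma hamming_frag_eq (P T : List α) (i m : ℕ) (hP : P.length = m) (hm : i + m ≤ T.length) :
    hamming P (frag T i (i + m)) =
      ((Finset.range m).filter fun π => P.getD π default ≠ T.getD (i + π) default).card := by
  unfold hamming
  rw [hP]
  congr 1
  apply Finset.filter_congr
  intro π hπ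
  rw [Finset.mem_range] at hπ
  rw [my_getD_frag T i π m hπ (by omega)]

lemma hammingStar_eq (P Q : List α) (m : ℕ) (hP : P.length = m) :
    hammingStar P Q =
      ((Finset.range m).filter fun π =>
        P.getD π default ≠ Q.getD (π % Q.length) default).card := by
  unfold hammingStar hamming
  rw [hP]
  congr 1
  apply Finset.filter_congr
  intro π hπ
  rw [Finset.mem_range] at hπ
  rw [my_getD_rep Q m π hπ]

/-- Pigeonhole: a set of ≤ c bad points leaves a q-long free window among c+1 blocks. -/
lemma run_free (B : Finset ℕ) (a q c : ℕ) (hB : B.card ≤ c) :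
    ∃ t, t ≤ c ∧ ∀ x, a + t * q ≤ x → x < a + t * q + q → x ∉ B := by
  by_contra h
  push_neg at h
  have h' : ∀ t, ∃ x, t ≤ c → (a + t * q ≤ x ∧ x < a + t * q + q ∧ x ∈ B) := by
    intro t
    by_cases ht : t ≤ c
    · obtain ⟨x, hx1, hx2, hx3⟩ := h t ht
      exact ⟨x, fun _ => ⟨hx1, hx2, hx3⟩⟩
    · exact ⟨0, fun hc => absurd hc ht⟩
  choose f hf using h'
  have hcard : (Finset.range (c + 1)).card ≤ B.card := by
    apply Finset.card_le_card_of_injOn f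
    · intro t ht
      rw [Finset.mem_coe, Finset.mem_range] at ht
      exact (hf t (by omega)).2.2
    · intro t1 ht1 t2 ht2 heq
      simp only [Finset.coe_range, Set.mem_Iio] at ht1 ht2
      obtain ⟨a1, b1, _⟩ := hf t1 (by omega)
      obtain ⟨a2, b2, _⟩ := hf t2 (by omega)
      rw [heq] at a1 b1
      by_contra hne
      rcases Nat.lt_or_ge t1 t2 with hlt | hge
      · have h' : (t1 + 1) * q ≤ t2 * q := Nat.mul_le_mul_right q (by omega)
        rw [add_mul, one_mul] at h'
        omega
      · have h' : (t2 + 1) * q ≤ t1 * q := Nat.mul_le_mul_right q (by omega)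
        rw [add_mul, one_mul] at h'
        omega
  rw [Finset.card_range] at hcard
  omega

lemma flatten_rep_getD (U : List α) (t i : ℕ) (h : i < t * U.length) :
    ((List.replicate t U).flatten).getD i default = U.getD (i % U.length) default := by
  induction t generalizing i with
  | zero => rw [zero_mul] at h; omega
  | succ t ih =>
    rw [add_mul, one_mul] at h
    rw [List.replicate_succ, List.flatten_cons]
    by_cases hi : i < U.length
    · rw [List.getD_append _ _ _ _ hi, Nat.mod_eq_of_lt hi]
    · push_neg at hi
      have h2 : i - U.length < t * U.length := by omega
      rw [List.getD_append_right _ _ _ _ hi, ih _ h2]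
      have h3 : i % U.length = (i - U.length) % U.length := by
        conv_lhs => rw [show i = U.length + (i - U.length) from by omega]
        rw [Nat.add_mod_left]
      rw [h3]

lemma periodic_not_primitive (Q : List α) (g : ℕ) (hg : 0 < g) (hgq : g ∣ Q.length)
    (hlt : g < Q.length)
    (hper : ∀ u, u < Q.length → Q.getD u default = Q.getD (u % g) default) :
    ¬ Primitive Q := by
  intro hprim
  set q := Q.length with hq
  set U := Q.take g with hU
  have hUlen : U.length = g := by
    rw [hU, List.length_take]; omega
  set t := q / g with ht
  have htg : t * g = q := Nat.div_mul_cancel hgq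
  have ht2 : 2 ≤ t := by
    rcases Nat.lt_or_ge t 2 with h2 | h2
    · interval_cases t <;> omega
    · exact h2
  apply hprim.2 U t ht2
  apply List.ext_getElem
  · rw [List.length_flatten]
    simp [List.map_replicate, hUlen]
    omega
  · intro n h1 h2
    have hn : n < q := by omega
    have hflen : n < t * U.length := by rw [hUlen]; omega
    have hmod : n % g < g := Nat.mod_lt _ hg
    have hQg : U.getD (n % g) default = Q.getD (n % g) default := by
      have hh : n % g < U.length := by omega
      rw [List.getD_eq_getElem _ _ hh, List.getD_eq_getElem _ _ (by omega : n % g < Q.length)]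
      exact List.getElem_take
    calc Q[n] = Q.getD n default := (List.getD_eq_getElem Q default h1).symm
      _ = Q.getD (n % g) default := hper n hn
      _ = U.getD (n % g) default := hQg.symm
      _ = ((List.replicate t U).flatten).getD n default := by
          rw [flatten_rep_getD U t n hflen, hUlen]
      _ = ((List.replicate t U).flatten)[n] := List.getD_eq_getElem _ default h2

/-- A primitive word equals no nontrivial rotation of itself. -/
lemma rotation_trivial (Q : List α) (hQ : Primitive Q) (s : ℕ) (hs : 0 < s) (hsq : s < Q.length)
    (hrot : ∀ u, u < Q.length → Q.getD u default = Q.getD ((u + s) % Q.length) default) :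
    False := by
  set q := Q.length with hqdef
  have hq : 0 < q := by omega
  -- iterate the rotation
  have hiter : ∀ a u, u < q → Q.getD u default = Q.getD ((u + a * s) % q) default := by
    intro a
    induction a with
    | zero => intro u hu; simp [Nat.mod_eq_of_lt hu]
    | succ a ih =>
      intro u hu
      have h1 := ih u hu
      have h2 := hrot ((u + a * s) % q) (Nat.mod_lt _ hq)
      rw [Nat.mod_add_mod] at h2
      rw [h1, h2]
      congr 2
      ring_nf
  -- Bezout: find a with (a * s) % q = gcd s q % q
  set g := Nat.gcd s q with hg
  have hg0 : 0 < g := Nat.gcd_pos_of_pos_left _ hs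
  have hgdvd : g ∣ q := Nat.gcd_dvd_right s q
  have hgle : g ≤ s := Nat.le_of_dvd hs (Nat.gcd_dvd_left s q)
  obtain ⟨a, ha⟩ : ∃ a : ℕ, (a * s) % q = g % q := by
    have hbez : (g : ℤ) = s * Nat.gcdA s q + q * Nat.gcdB s q := Nat.gcd_eq_gcd_ab s q
    refine ⟨((Nat.gcdA s q) % q).toNat, ?_⟩
    have hnn : (0:ℤ) ≤ Nat.gcdA s q % q := Int.emod_nonneg _ (by exact_mod_cast hq.ne')
    have hcast : (((Nat.gcdA s q) % q).toNat : ℤ) = Nat.gcdA s q % q := Int.toNat_of_nonneg hnn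
    have : ((((Nat.gcdA s q) % q).toNat * s : ℕ) : ℤ) % q = ((g : ℕ) : ℤ) % q := by
      push_cast
      rw [hcast]
      conv_lhs => rw [Int.mul_emod, Int.emod_emod_of_dvd _ dvd_rfl]
      rw [← Int.mul_emod]
      have hgs : (Nat.gcdA s q) * (s : ℤ) = (g : ℤ) - q * Nat.gcdB s q := by linarith [hbez]
      rw [hgs]
      simp [Int.sub_emod, Int.mul_emod_right]
    have h1 : ((((Nat.gcdA s q) % q).toNat * s : ℕ) % q : ℤ) = ((g % q : ℕ) : ℤ) := by
      push_cast
      push_cast at this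
      exact this
    exact_mod_cast h1
  -- rotation by g
  have hrotg : ∀ u, u < q → Q.getD u default = Q.getD ((u + g) % q) default := by
    intro u hu
    have h1 := hiter a u hu
    have : (u + a * s) % q = (u + g) % q := by
      rw [Nat.add_mod u (a*s) q, ha, ← Nat.add_mod]
    rw [this] at h1
    exact h1
  -- period g
  have hper : ∀ u, u < q → Q.getD u default = Q.getD (u % g) default := by
    intro u
    induction u using Nat.strong_induction_on with
    | _ u ih =>
      intro hu
      by_cases hug : u < g
      · rw [Nat.mod_eq_of_lt hug]
      · push_neg at hug
        have h1 : u - g < q := by omega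
        have h2 := hrotg (u - g) h1
        have h3 : (u - g + g) % q = u := by
          rw [Nat.sub_add_cancel hug]; exact Nat.mod_eq_of_lt hu
        rw [h3] at h2
        have h4 := ih (u - g) (by omega) h1
        have h5 : (u - g) % g = u % g := by
          conv_rhs => rw [show u = (u - g) + g by omega]
          rw [Nat.add_mod_right]
        rw [← h2, h4, h5]
  exact periodic_not_primitive Q g hg0 hgdvd (by omega) hper hQ

lemma card_sub_shift (i a b : ℕ) (s : Finset ℕ) (P : ℕ → Prop) [DecidablePred P]
    (hia : i ≤ a)
    (hmem : ∀ x, a ≤ x → x < b → P x → (x - i) ∈ s) :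
    ((Finset.Ico a b).filter P).card ≤ s.card := by
  apply Finset.card_le_card_of_injOn (fun x => x - i)
  · intro x hx
    rw [Finset.mem_coe, Finset.mem_filter, Finset.mem_Ico] at hx
    exact hmem x hx.1.1 hx.1.2 hx.2
  · intro x hx y hy hxy
    simp only [Finset.coe_filter, Set.mem_setOf_eq, Finset.mem_Ico] at hx hy
    dsimp only at hxy
    omega

end Aux


/-- if δ_H(P,Q*) = d exactly, there are at most 6d k-mismatch occurrences. -/
theorem periodic_few_occurrences {α : Type*} [DecidableEq α] [Inhabited α]
    (P T Q : List α) (m n k d : ℕ)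
    (hP : P.length = m) (hT : T.length = n)
    (hmn : m ≤ n) (hn : 2 * n ≤ 3 * m) (hk : k ≤ m)
    (hpre : hamming P (frag T 0 m) ≤ k) (hsuf : hamming P (frag T (n - m) n) ≤ k)
    (hd0 : 0 < d) (hd : 2 * k ≤ d)
    (hQ : Primitive Q) (hQlen : 8 * d * Q.length ≤ m)
    (hPQ : hammingStar P Q = d) :
    (occH k P T).card ≤ 6 * d := by
  classical
  set q := Q.length with hqdef
  have hq : 0 < q := List.length_pos_iff.mpr hQ.1
  -- mismatch set of P against Q^∞
  set MisP : Finset ℕ := (Finset.range m).filter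
    (fun π => P.getD π default ≠ Q.getD (π % q) default) with hMisPdef
  have hMisP : MisP.card = d := by
    rw [hMisPdef, hqdef, ← hPQ, hammingStar_eq P Q m hP]
  -- hamming of P to T at shift i
  have hamil : ∀ i, i ≤ n - m →
      hamming P (frag T i (i + m)) =
        ((Finset.range m).filter fun π =>
          P.getD π default ≠ T.getD (i + π) default).card := by
    intro i hi
    exact hamming_frag_eq P T i m hP (by omega)
  -- prefix occurrence rephrased
  have hpre' : ((Finset.range m).filter fun π =>
      P.getD π default ≠ T.getD π default).card ≤ k := by
    have h0 : frag T 0 m = frag T 0 (0 + m) := by norm_num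
    rw [h0] at hpre
    rw [hamil 0 (by omega)] at hpre
    simpa using hpre
  -- mismatches of T[0..m) against Q^∞
  have hB1 : ((Finset.range m).filter fun x =>
      T.getD x default ≠ Q.getD (x % q) default).card ≤ k + d := by
    calc ((Finset.range m).filter fun x =>
        T.getD x default ≠ Q.getD (x % q) default).card
        ≤ (((Finset.range m).filter fun x => P.getD x default ≠ T.getD x default) ∪
           MisP).card := by
          apply Finset.card_le_card
          intro x hx
          rw [Finset.mem_filter, Finset.mem_range] at hx
          simp only [Finset.mem_union, Finset.mem_filter, Finset.mem_range, hMisPdef]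
          by_cases hpt : P.getD x default = T.getD x default
          · right
            refine ⟨hx.1, ?_⟩
            rw [hpt]; exact hx.2
          · left; exact ⟨hx.1, hpt⟩
      _ ≤ ((Finset.range m).filter fun x =>
            P.getD x default ≠ T.getD x default).card + MisP.card :=
          Finset.card_union_le _ _
      _ ≤ k + d := by rw [hMisP]; omega
  -- CLAIM 1: every k-mismatch occurrence position is a multiple of q
  have claim1 : ∀ i, i ≤ n - m → hamming P (frag T i (i + m)) ≤ k → i % q = 0 := by
    intro i hi hocc
    by_contra hr
    have hrq : 0 < i % q := Nat.pos_of_ne_zero hr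
    have hrlt : i % q < q := Nat.mod_lt _ hq
    set r := i % q with hrdef
    set s := q - r with hsdef
    have hs0 : 0 < s := by omega
    have hsq : s < q := by omega
    rw [hamil i hi] at hocc
    set Bad : Finset ℕ := (Finset.Ico i m).filter
      (fun x => Q.getD (x % q) default ≠ Q.getD ((x - i) % q) default) with hBaddef
    have hB2 : ((Finset.Ico i m).filter fun x =>
        T.getD x default ≠ Q.getD ((x - i) % q) default).card ≤ k + d := by
      calc _ ≤ ((((Finset.range m).filter fun y =>
              P.getD y default ≠ T.getD (i + y) default) ∪ MisP)).card := by
            apply card_sub_shift i i m _ _ (le_refl i)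
            intro x hx1 hx2 hPx
            simp only [Finset.mem_union, Finset.mem_filter, Finset.mem_range, hMisPdef]
            have hxi : i + (x - i) = x := by omega
            by_cases hpt : P.getD (x - i) default = T.getD x default
            · right
              refine ⟨by omega, ?_⟩
              rw [hpt]; exact hPx
            · left
              refine ⟨by omega, ?_⟩
              rw [hxi]; exact hpt
        _ ≤ ((Finset.range m).filter fun y =>
              P.getD y default ≠ T.getD (i + y) default).card + MisP.card :=
            Finset.card_union_le _ _
        _ ≤ k + d := by rw [hMisP]; omega
    have hBad : Bad.card ≤ 2 * (k + d) := by
      calc Bad.card ≤ (((Finset.range m).filter fun x =>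
            T.getD x default ≠ Q.getD (x % q) default) ∪
            ((Finset.Ico i m).filter fun x =>
            T.getD x default ≠ Q.getD ((x - i) % q) default)).card := by
            apply Finset.card_le_card
            intro x hx
            rw [hBaddef, Finset.mem_filter, Finset.mem_Ico] at hx
            rw [Finset.mem_union, Finset.mem_filter, Finset.mem_range,
              Finset.mem_filter, Finset.mem_Ico]
            by_cases htq : T.getD x default = Q.getD (x % q) default
            · right
              refine ⟨hx.1, ?_⟩
              rw [htq]; exact hx.2
            · left; exact ⟨by omega, htq⟩
        _ ≤ _ + _ := Finset.card_union_le _ _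
        _ ≤ 2 * (k + d) := by omega
    -- there is a q-long window inside [i, m) free of Bad
    have hL : i + (2 * (k + d) + 1) * q + q ≤ m := by
      have h1 : 2 * (m - i) ≥ m := by omega
      have h2 : (2 * (k + d) + 1) * q + q = (2*k + 2*d + 2) * q := by ring
      have h3 : (2*k + 2*d + 2) * q ≤ (4 * d) * q := Nat.mul_le_mul_right q (by omega)
      have h4 : 8 * d * q ≤ m := hQlen
      have h5 : 2 * ((4 * d) * q) = 8 * d * q := by ring
      omega
    obtain ⟨t, htc, hfree⟩ := run_free Bad i q (2 * (k + d)) hBad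
    set x₀ := i + t * q with hx₀def
    have hx₀m : x₀ + q ≤ m := by
      have h6 : t * q ≤ (2 * (k + d)) * q := Nat.mul_le_mul_right q htc
      have h7 : (2 * (k+d)) * q ≤ (2 * (k + d) + 1) * q := Nat.mul_le_mul_right q (by omega)
      omega
    have hgood : ∀ x, x₀ ≤ x → x < x₀ + q →
        Q.getD (x % q) default = Q.getD ((x - i) % q) default := by
      intro x h1 h2
      have hnB := hfree x h1 h2
      by_contra hne
      apply hnB
      rw [hBaddef, Finset.mem_filter, Finset.mem_Ico]
      exact ⟨⟨by omega, by omega⟩, hne⟩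
    -- Q is invariant under rotation by s
    have hrot : ∀ u, u < q → Q.getD u default = Q.getD ((u + s) % q) default := by
      intro u hu
      set t' := (u + s) % q with ht'def
      have ht' : t' < q := Nat.mod_lt _ hq
      set x := x₀ + t' with hxdef
      have hgx := hgood x (by omega) (by omega)
      have e2 : (x - i) % q = t' := by
        have hxe : x - i = t' + t * q := by omega
        rw [hxe, Nat.add_mul_mod_self_right]
        exact Nat.mod_eq_of_lt ht'
      have e1 : x % q = u := by
        have h1 : x = (i + t') + t * q := by omega
        rw [h1, Nat.add_mul_mod_self_right, ht'def, Nat.add_mod_mod]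
        have h3 := Nat.div_add_mod i q
        have h4 : q * (i / q + 1) = q * (i / q) + q := by ring
        have h2 : i + (u + s) = u + q * (i / q + 1) := by omega
        rw [h2]
        have h5 : q * (i / q + 1) = (i / q + 1) * q := by ring
        rw [h5, Nat.add_mul_mod_self_right]
        exact Nat.mod_eq_of_lt hu
      rw [e1, e2] at hgx
      exact hgx
    exact rotation_trivial Q hQ s hs0 (by omega) (by rw [← hqdef]; exact hrot)
  -- occurrence set membership
  have hoccmem : ∀ i, i ∈ occH k P T ↔
      i ≤ n - m ∧ hamming P (frag T i (i + m)) ≤ k := by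
    intro i
    unfold occH
    rw [Finset.mem_filter, Finset.mem_range, hP, hT]
    constructor
    · rintro ⟨h1, h2⟩; exact ⟨by omega, h2⟩
    · rintro ⟨h1, h2⟩; exact ⟨by omega, h2⟩
  -- the suffix occurrence is at a multiple of q
  have hsufq : (n - m) % q = 0 := by
    apply claim1 (n - m) (le_refl _)
    rw [show (n - m) + m = n by omega]
    exact hsuf
  -- suffix occurrence rephrased
  have hsuf' : ((Finset.range m).filter fun y =>
      P.getD y default ≠ T.getD ((n - m) + y) default).card ≤ k := by
    have h := hamil (n - m) (le_refl _)
    rw [show (n - m) + m = n by omega] at h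
    rw [← h]
    exact hsuf
  -- mismatches of T against Q^∞ on all of [0, n)
  set MisT : Finset ℕ := (Finset.range n).filter
    (fun x => T.getD x default ≠ Q.getD (x % q) default) with hMisTdef
  have hMisT : MisT.card ≤ 2 * (k + d) := by
    have hB2' : ((Finset.Ico (n - m) n).filter fun x =>
        T.getD x default ≠ Q.getD (x % q) default).card ≤ k + d := by
      calc _ ≤ ((((Finset.range m).filter fun y =>
              P.getD y default ≠ T.getD ((n - m) + y) default) ∪ MisP)).card := by
            apply card_sub_shift (n - m) (n - m) n _ _ (le_refl _)
            intro x hx1 hx2 hPx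
            simp only [Finset.mem_union, Finset.mem_filter, Finset.mem_range, hMisPdef]
            have hxi : (n - m) + (x - (n - m)) = x := by omega
            have hmod : x % q = (x - (n - m)) % q := by
              obtain ⟨c, hc⟩ := Nat.dvd_of_mod_eq_zero hsufq
              rw [Nat.mul_comm] at hc
              have hce : x = (x - (n - m)) + c * q := by omega
              conv_lhs => rw [hce]
              rw [Nat.add_mul_mod_self_right]
            by_cases hpt : P.getD (x - (n - m)) default = T.getD x default
            · right
              refine ⟨by omega, ?_⟩
              rw [hpt, ← hmod]
              exact hPx
            · left
              refine ⟨by omega, ?_⟩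
              rw [hxi]; exact hpt
        _ ≤ _ + MisP.card := Finset.card_union_le _ _
        _ ≤ k + d := by rw [hMisP]; omega
    calc MisT.card ≤ (((Finset.range m).filter fun x =>
          T.getD x default ≠ Q.getD (x % q) default) ∪
          ((Finset.Ico (n - m) n).filter fun x =>
          T.getD x default ≠ Q.getD (x % q) default)).card := by
          apply Finset.card_le_card
          intro x hx
          rw [hMisTdef, Finset.mem_filter, Finset.mem_range] at hx
          rw [Finset.mem_union, Finset.mem_filter, Finset.mem_range,
            Finset.mem_filter, Finset.mem_Ico]
          by_cases hxm : x < m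
          · left; exact ⟨hxm, hx.2⟩
          · right; exact ⟨⟨by omega, hx.1⟩, hx.2⟩
      _ ≤ _ + _ := Finset.card_union_le _ _
      _ ≤ 2 * (k + d) := by omega
  -- weighted double counting
  have lower : ∀ i ∈ occH k P T, d ≤ ∑ π ∈ MisP,
      (if P.getD π default = T.getD (i + π) default then (2:ℕ) else 0) := by
    intro i hi
    rw [hoccmem] at hi
    obtain ⟨hi1, hi2⟩ := hi
    rw [hamil i hi1] at hi2
    have hsum : ∑ π ∈ MisP,
        (if P.getD π default = T.getD (i + π) default then (2:ℕ) else 0)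
        = 2 * (MisP.filter fun π => P.getD π default = T.getD (i + π) default).card := by
      rw [← Finset.sum_filter, Finset.sum_const, smul_eq_mul, mul_comm]
    rw [hsum]
    have hsplit := Finset.card_filter_add_card_filter_not
      (s := MisP) (fun π => P.getD π default = T.getD (i + π) default)
    have hbadle : (MisP.filter fun π =>
        ¬ P.getD π default = T.getD (i + π) default).card ≤ k := by
      calc _ ≤ ((Finset.range m).filter fun π =>
            P.getD π default ≠ T.getD (i + π) default).card := by
            apply Finset.card_le_card
            intro π hπ
            rw [Finset.mem_filter, hMisPdef, Finset.mem_filter] at hπ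
            rw [Finset.mem_filter]
            exact ⟨hπ.1.1, hπ.2⟩
        _ ≤ k := hi2
    rw [hMisP] at hsplit
    omega
  have upper : ∑ i ∈ occH k P T, ∑ π ∈ MisP,
      (if P.getD π default = T.getD (i + π) default then (2:ℕ) else 0)
      ≤ d * (4 * (k + d)) := by
    rw [Finset.sum_comm]
    calc ∑ π ∈ MisP, ∑ i ∈ occH k P T,
          (if P.getD π default = T.getD (i + π) default then (2:ℕ) else 0)
        ≤ ∑ _π ∈ MisP, 2 * (2 * (k + d)) := by
          apply Finset.sum_le_sum
          intro π hπ
          rw [hMisPdef, Finset.mem_filter, Finset.mem_range] at hπ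
          have hsum : ∑ i ∈ occH k P T,
              (if P.getD π default = T.getD (i + π) default then (2:ℕ) else 0)
              = 2 * ((occH k P T).filter fun i =>
                P.getD π default = T.getD (i + π) default).card := by
            rw [← Finset.sum_filter, Finset.sum_const, smul_eq_mul, mul_comm]
          rw [hsum]
          have hcard : ((occH k P T).filter fun i =>
              P.getD π default = T.getD (i + π) default).card ≤ MisT.card := by
            apply Finset.card_le_card_of_injOn (fun i => i + π)
            · intro i hi
              rw [Finset.mem_coe, Finset.mem_filter] at hi
              obtain ⟨hiocc, hieq⟩ := hi
              rw [hoccmem] at hiocc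
              have hiq := claim1 i hiocc.1 hiocc.2
              show i + π ∈ (MisT : Set ℕ)
              rw [hMisTdef, Finset.mem_coe, Finset.mem_filter, Finset.mem_range]
              have hmod : (i + π) % q = π % q := by
                obtain ⟨c, hc⟩ := Nat.dvd_of_mod_eq_zero hiq
                rw [Nat.mul_comm] at hc
                have hce : i + π = π + c * q := by omega
                rw [hce, Nat.add_mul_mod_self_right]
              constructor
              · omega
              · rw [hmod, ← hieq]
                exact hπ.2
            · intro a _ b _ hab
              dsimp only at hab
              omega
          omega
      _ ≤ d * (4 * (k + d)) := by
          rw [Finset.sum_const, hMisP, smul_eq_mul]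
          apply le_of_eq
          ring
  have hlow : (occH k P T).card * d ≤ ∑ i ∈ occH k P T, ∑ π ∈ MisP,
      (if P.getD π default = T.getD (i + π) default then (2:ℕ) else 0) := by
    have h := Finset.card_nsmul_le_sum (occH k P T)
      (fun i => ∑ π ∈ MisP,
        (if P.getD π default = T.getD (i + π) default then (2:ℕ) else 0)) d lower
    simpa [smul_eq_mul] using h
  have hfin : (occH k P T).card * d ≤ d * (4 * (k + d)) := le_trans hlow upper
  have hstep : d * (4 * (k + d)) ≤ (6 * d) * d := by
    calc d * (4 * (k + d)) ≤ d * (6 * d) := Nat.mul_le_mul_left d (by omega)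
      _ = (6 * d) * d := by ring
  exact Nat.le_of_mul_le_mul_right (le_trans hfin hstep) hd0
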